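/- Let A be a finite alphabet and R ⊆ F(A) contain the commutator [e,f] as a consequence: suppose e, f, g ∈ A with relators efg and e⁻¹f⁻¹g⁻¹ in R. Then for every n ≥ 0 the word eⁿ fⁿ gⁿ admits a null-expression over R of area at most 3n², i.e., Area_R(eⁿfⁿgⁿ) ≤ 3n². -/

import Mathlib

def HasNullExpr {A : Type*} (S : Set (FreeGroup A)) (m : ℕ) (w : FreeGroup A) : Prop :=
  ∃ x r : Fin m → FreeGroup A,
    (∀ i, r i ∈ S ∪ (fun g => g⁻¹) '' S) ∧
    w = (List.ofFn (fun i => x i * r i * (x i)⁻¹)).prod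

namespace AreaAux

variable {A : Type*} (S : Set (FreeGroup A))

/-- List version of having a null expression of area `m`. -/
def Ar (m : ℕ) (w : FreeGroup A) : Prop :=
  ∃ L : List (FreeGroup A), L.length = m ∧
    (∀ y ∈ L, ∃ x r, (r ∈ S ∨ r⁻¹ ∈ S) ∧ y = x * r * x⁻¹) ∧ w = L.prod

variable {S}

lemma ar_congr {m : ℕ} {w w' : FreeGroup A} (h : w = w') (hw : Ar S m w) : Ar S m w' :=
  h ▸ hw

lemma ar_of_eq {m m' : ℕ} {w w' : FreeGroup A} (hm : m = m') (h : w = w')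
    (hw : Ar S m w) : Ar S m' w' := hm ▸ h ▸ hw

lemma ar_one {r : FreeGroup A} (h : r ∈ S ∨ r⁻¹ ∈ S) (x : FreeGroup A) :
    Ar S 1 (x * r * x⁻¹) := by
  refine ⟨[x * r * x⁻¹], rfl, ?_, by simp⟩
  intro y hy
  simp only [List.mem_singleton] at hy
  exact ⟨x, r, h, hy⟩

lemma ar_mul {a b : ℕ} {u v : FreeGroup A} (hu : Ar S a u) (hv : Ar S b v) :
    Ar S (a + b) (u * v) := by
  obtain ⟨L1, hl1, hm1, hp1⟩ := hu
  obtain ⟨L2, hl2, hm2, hp2⟩ := hv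
  refine ⟨L1 ++ L2, by simp [hl1, hl2], ?_, by simp [hp1, hp2]⟩
  intro y hy
  rcases List.mem_append.1 hy with h | h
  · exact hm1 y h
  · exact hm2 y h

lemma ar_conj {m : ℕ} {w : FreeGroup A} (c : FreeGroup A) (h : Ar S m w) :
    Ar S m (c * w * c⁻¹) := by
  obtain ⟨L, hl, hm, hp⟩ := h
  refine ⟨L.map (fun y => c * y * c⁻¹), by simp [hl], ?_, ?_⟩
  · intro y hy
    simp only [List.mem_map] at hy
    obtain ⟨z, hz, rfl⟩ := hy
    obtain ⟨x, r, hr, rfl⟩ := hm z hz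
    exact ⟨c * x, r, hr, by group⟩
  · have key : ∀ L' : List (FreeGroup A),
        (L'.map (fun y => c * y * c⁻¹)).prod = c * L'.prod * c⁻¹ := by
      intro L'
      induction L' with
      | nil => simp
      | cons a t ih =>
        simp only [List.map_cons, List.prod_cons, ih]
        group
    rw [key, ← hp]

lemma ar_to_hasNullExpr {m : ℕ} {w : FreeGroup A} (h : Ar S m w) :
    HasNullExpr S m w := by
  obtain ⟨L, hl, hm, hp⟩ := h
  subst hl
  have hch : ∀ i : Fin L.length, ∃ x r,
      (r ∈ S ∪ (fun g => g⁻¹) '' S) ∧ L.get i = x * r * x⁻¹ := by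
    intro i
    obtain ⟨x, r, hr, hy⟩ := hm (L.get i) (L.get_mem i)
    rcases hr with hr | hr
    · exact ⟨x, r, Set.mem_union_left _ hr, hy⟩
    · exact ⟨x, r, Set.mem_union_right _ ⟨r⁻¹, hr, by simp⟩, hy⟩
  choose x r hr hy using hch
  refine ⟨x, r, hr, ?_⟩
  rw [hp]
  congr 1
  apply List.ext_get (by simp)
  intro i h1 h2
  simp only [List.get_ofFn]
  exact hy ⟨i, h1⟩

end AreaAux

open AreaAux in
theorem area_triangle_power {A : Type*} [Fintype A] (R : Set (FreeGroup A))
    (e f g : A)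
    (h1 : FreeGroup.of e * FreeGroup.of f * FreeGroup.of g ∈ R)
    (h2 : (FreeGroup.of e)⁻¹ * (FreeGroup.of f)⁻¹ * (FreeGroup.of g)⁻¹ ∈ R)
    (n : ℕ) :
    ∃ m ≤ 3 * n ^ 2,
      HasNullExpr R m ((FreeGroup.of e) ^ n * (FreeGroup.of f) ^ n * (FreeGroup.of g) ^ n) := by
  set E := FreeGroup.of e with hE
  set F := FreeGroup.of f with hF
  set G := FreeGroup.of g with hG
  -- The commutator [F, E⁻¹] has area 2.
  have hcomm : Ar R 2 (F * E⁻¹ * F⁻¹ * E) := by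
    have a1 : Ar R 1 (E⁻¹ * (E * F * G) * (E⁻¹)⁻¹) := ar_one (Or.inl h1) _
    have a2 : Ar R 1 ((E⁻¹ * F * E) * (E⁻¹ * F⁻¹ * G⁻¹) * (E⁻¹ * F * E)⁻¹) :=
      ar_one (Or.inl h2) _
    exact ar_congr (by group) (ar_mul a1 a2)
  -- Commutators [F^k, E⁻¹] have area 2k.
  have hcommk : ∀ k : ℕ, Ar R (2 * k) (F ^ k * E⁻¹ * (F ^ k)⁻¹ * E) := by
    intro k
    induction k with
    | zero => exact ⟨[], rfl, by simp, by simp⟩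
    | succ k ih =>
      have step := ar_mul (ar_conj (F ^ k) hcomm) ih
      exact ar_of_eq (by ring) (by group) step
  -- u_n = E^n F^n ((EF)^n)⁻¹ has area ≤ n².
  have hu : ∀ k : ℕ, ∃ a ≤ k * k, Ar R a (E ^ k * F ^ k * ((E * F) ^ k)⁻¹) := by
    intro k
    induction k with
    | zero => exact ⟨0, le_refl 0, ⟨[], rfl, by simp, by simp⟩⟩
    | succ k ih =>
      obtain ⟨a, ha, har⟩ := ih
      refine ⟨2 * k + a, by nlinarith, ?_⟩
      have step := ar_mul (ar_conj (E ^ (k + 1)) (hcommk k)) har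
      refine ar_congr ?_ step
      rw [pow_succ (E * F) k]
      generalize (E * F) ^ k = Q
      group
  -- v_n = (EF)^n G^n has area n.
  have hv : ∀ k : ℕ, Ar R k ((E * F) ^ k * G ^ k) := by
    intro k
    induction k with
    | zero => exact ⟨[], rfl, by simp, by simp⟩
    | succ k ih =>
      have step := ar_mul (ar_conj ((E * F) ^ k) (ar_one (Or.inl h1) 1)) ih
      refine ar_of_eq (by omega) ?_ step
      rw [pow_succ (E * F) k, pow_succ' G k]
      generalize (E * F) ^ k = Q
      group
  obtain ⟨a, ha, har⟩ := hu n
  refine ⟨a + n, by nlinarith, ?_⟩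
  apply ar_to_hasNullExpr
  exact ar_congr (by group) (ar_mul har (hv n))
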